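/- Let λ_uu, λ_ss, λ_s > 0 with λ_ss·λ_s·λ_uu = 1 and 1/P_b² ≥ 4λ_ss² (P_b ≠ 0 real), and suppose M/λ_s² ≥ 2 where M > 0, ε₀ > 0 satisfy: for all |u| ≤ ε₀, |ε| ≤ ε₀, |c| ≥ 1/100, (c² + cu)/((1+ε²+c²)(1+ε²)) ≥ M. Let Q_a, Q_c, ε be real numbers with |ε| ≤ ε₀, |8ε(−Q_c)(−Q_a+ε)| ≤ ε₀, and |8ε(1+εQ_a)(−Q_a+ε)| ≤ λ_s²/2. Then for every real c with |c| ≥ 1/100, the quantity D² := [((1+εQ_a−cQ_c)/P_b)²λ_uu² + (λ_ss c)²λ_uu² + (λ_uu ε)²((−Q_a+ε)/P_b)² + (λ_ss c)²((−Q_a+ε)/P_b)² + 2λ_uu²ε(1+εQ_a−cQ_c)(−Q_a+ε)/P_b²] / ((1+ε²+c²)(1+ε²)) satisfies D² ≥ 3/2 > 1. -/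
import Mathlib

set_option maxHeartbeats 1000000


theorem stmt_9 (lam_uu lam_ss lam_s P_b M ε₀ Q_a Q_c ε : ℝ)
    (huu : 0 < lam_uu) (hss : 0 < lam_ss) (hs : 0 < lam_s)
    (hprod : lam_ss * lam_s * lam_uu = 1)
    (hPb : P_b ≠ 0) (hPb2 : 4 * lam_ss^2 ≤ 1 / P_b^2)
    (hM : 0 < M) (hε₀ : 0 < ε₀)
    (hMest : ∀ u ε' c : ℝ, |u| ≤ ε₀ → |ε'| ≤ ε₀ → (1:ℝ)/100 ≤ |c| →
      M ≤ (c^2 + c*u) / ((1 + ε'^2 + c^2) * (1 + ε'^2)))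
    (hM2 : 2 ≤ M / lam_s^2)
    (hε : |ε| ≤ ε₀)
    (hu : |8 * ε * (-Q_c) * (-Q_a + ε)| ≤ ε₀)
    (hw : |8 * ε * (1 + ε*Q_a) * (-Q_a + ε)| ≤ lam_s^2 / 2) :
    ∀ c : ℝ, (1:ℝ)/100 ≤ |c| →
      (3:ℝ)/2 ≤
        (((1 + ε*Q_a - c*Q_c)/P_b)^2 * lam_uu^2
          + (lam_ss*c)^2 * lam_uu^2
          + (lam_uu*ε)^2 * ((-Q_a + ε)/P_b)^2
          + (lam_ss*c)^2 * ((-Q_a + ε)/P_b)^2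
          + 2 * lam_uu^2 * ε * ((1 + ε*Q_a - c*Q_c) * (-Q_a + ε) / P_b^2))
        / ((1 + ε^2 + c^2) * (1 + ε^2)) ∧
      (1:ℝ) < 3/2 := by
  intro c hc
  refine ⟨?_, by norm_num⟩
  have hP2 : (0:ℝ) < P_b^2 := by positivity
  have hDen1 : (1:ℝ) ≤ (1 + ε^2 + c^2) * (1 + ε^2) := by nlinarith [sq_nonneg ε, sq_nonneg c]
  have hDenpos : (0:ℝ) < (1 + ε^2 + c^2) * (1 + ε^2) := by positivity
  have hKpos : 0 < lam_ss^2 * lam_uu^2 := by positivity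
  have hKs : (lam_ss^2 * lam_uu^2) * lam_s^2 = 1 := by nlinarith [hprod]
  set A := 1 + ε*Q_a with hA
  set B := -Q_a + ε with hB
  set K := lam_ss^2 * lam_uu^2 with hK
  set t := ε * (A - c*Q_c) * B with ht
  set N := ((A - c*Q_c)/P_b)^2 * lam_uu^2
          + (lam_ss*c)^2 * lam_uu^2
          + (lam_uu*ε)^2 * (B/P_b)^2
          + (lam_ss*c)^2 * (B/P_b)^2
          + 2 * lam_uu^2 * ε * ((A - c*Q_c) * B / P_b^2) with hN
  have expand : N = (lam_uu^2 * ((A - c*Q_c) + ε*B)^2 + lam_ss^2*c^2*B^2) * (1/P_b^2)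
      + lam_ss^2 * c^2 * lam_uu^2 := by
    rw [hN]; field_simp; ring
  have key : c^2 * K + 8 * K * t ≤ N := by
    rw [expand]
    have h0 : (0:ℝ) ≤ lam_ss^2*c^2*B^2*(1/P_b^2) := by positivity
    rcases le_or_gt 0 t with hpos | hneg
    · have hS : 4*t ≤ ((A - c*Q_c) + ε*B)^2 := by nlinarith [sq_nonneg (A - c*Q_c - ε*B)]
      have h1 : lam_uu^2*(4*t)*(4*lam_ss^2) ≤ lam_uu^2*((A - c*Q_c)+ε*B)^2*(1/P_b^2) := by
        apply mul_le_mul _ hPb2 (by positivity) (by positivity)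
        exact mul_le_mul_of_nonneg_left hS (by positivity)
      nlinarith [h1, h0, mul_nonneg hKpos.le hpos]
    · have h1 : (0:ℝ) ≤ lam_uu^2*((A - c*Q_c)+ε*B)^2*(1/P_b^2) := by positivity
      nlinarith [mul_neg_of_pos_of_neg hKpos hneg, h0, h1]
  have hM1 : M ≤ (c^2 + c*(8 * ε * (-Q_c) * B)) / ((1 + ε^2 + c^2) * (1 + ε^2)) :=
    hMest _ _ _ hu hε hc
  have hDenne : ((1 + ε^2 + c^2) * (1 + ε^2)) ≠ 0 := ne_of_gt hDenpos
  have split : (c^2 * K + 8 * K * t) / ((1 + ε^2 + c^2) * (1 + ε^2))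
      = K * ((c^2 + c*(8 * ε * (-Q_c) * B)) / ((1 + ε^2 + c^2) * (1 + ε^2)))
      + K * ((8 * ε * A * B) / ((1 + ε^2 + c^2) * (1 + ε^2))) := by
    rw [ht]; field_simp; ring
  have h1 : (c^2 * K + 8 * K * t) / ((1 + ε^2 + c^2) * (1 + ε^2)) ≤ N / ((1 + ε^2 + c^2) * (1 + ε^2)) := by
    gcongr
  have h2 : 2 ≤ K * ((c^2 + c*(8 * ε * (-Q_c) * B)) / ((1 + ε^2 + c^2) * (1 + ε^2))) := by
    have : K * M ≤ K * ((c^2 + c*(8 * ε * (-Q_c) * B)) / ((1 + ε^2 + c^2) * (1 + ε^2))) :=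
      mul_le_mul_of_nonneg_left hM1 hKpos.le
    have hms : 2 * lam_s^2 ≤ M := by
      rw [le_div_iff₀ (by positivity)] at hM2; linarith
    have hKM : 2 ≤ K * M := by
      have h := mul_le_mul_of_nonneg_left hms hKpos.le
      have h2 : (2:ℝ) = K * (2 * lam_s^2) := by linear_combination 2 * hKs.symm
      linarith
    linarith
  have h3 : -(1/2 : ℝ) ≤ K * ((8 * ε * A * B) / ((1 + ε^2 + c^2) * (1 + ε^2))) := by
    have hwl := (abs_le.mp hw).1
    have hKw : -(1/2 : ℝ) ≤ K * (8 * ε * A * B) := by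
      have h := mul_le_mul_of_nonneg_left hwl hKpos.le
      have h2 : -(1/2 : ℝ) = K * (-(lam_s^2/2)) := by linear_combination -(1/2) * hKs.symm
      linarith
    rcases le_or_gt 0 (8 * ε * A * B) with hp | hn
    · have : (0:ℝ) ≤ K * ((8 * ε * A * B) / ((1 + ε^2 + c^2) * (1 + ε^2))) := by positivity
      linarith
    · have : K * (8 * ε * A * B) ≤ K * ((8 * ε * A * B) / ((1 + ε^2 + c^2) * (1 + ε^2))) := by
        apply mul_le_mul_of_nonneg_left _ hKpos.le
        rw [div_eq_mul_inv]
        have hi1 : ((1 + ε^2 + c^2) * (1 + ε^2))⁻¹ ≤ 1 := inv_le_one_of_one_le₀ hDen1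
        have h5 := mul_le_mul_of_nonpos_left hi1 hn.le
        linarith [h5]
      linarith
  rw [split] at h1
  linarith
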